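/- (Convexity of angle-parametrized curves with curvature in an interval disjoint from [−1,1].) Let 1 ≤ κ₁ < κ₂ be real numbers and τ > 0. For i = 0, 1 let γ_i : [0,τ] → ℂ be a C² curve with Im γ_i(θ) > 0 for all θ, such that γ_i'(θ) = r_i(θ)·e^{iθ} with r_i(θ) > 0 for all θ, and whose hyperbolic geodesic curvature lies in (κ₁, κ₂) at every θ. Then for every s ∈ [0,1] the curve γ_s(θ) = (1−s)·γ₀(θ) + s·γ₁(θ) satisfies: Im γ_s(θ) > 0, γ_s'(θ) is a positive real multiple of e^{iθ} (so γ_s is regular with the same unit tangent direction e^{iθ}), and the hyperbolic geodesic curvature of γ_s lies in (κ₁, κ₂) at every θ ∈ [0,τ]. -/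

import Mathlib

open Set

/-- Euclidean curvature of a plane curve `γ : ℝ → ℂ`. -/
noncomputable def kappaE (γ : ℝ → ℂ) (t : ℝ) : ℝ :=
  ((starRingEnd ℂ) (deriv γ t) * deriv (deriv γ) t).im / ‖deriv γ t‖ ^ 3

/-- Hyperbolic geodesic curvature in the upper half-plane model. -/
noncomputable def kappaH (γ : ℝ → ℂ) (t : ℝ) : ℝ :=
  (γ t).im * kappaE γ t + (deriv γ t).re / ‖deriv γ t‖

/-- `θ` is a continuous argument for the unit tangent of `γ` on `[0,1]`. -/
def IsArgument (γ : ℝ → ℂ) (θ : ℝ → ℝ) : Prop :=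
  ContinuousOn θ (Icc 0 1) ∧
  ∀ t ∈ Icc (0:ℝ) 1,
    deriv γ t / (‖deriv γ t‖ : ℂ) = Complex.exp (θ t * Complex.I)

/-- If `γ` is `C²` and `deriv γ θ = r θ · e^{iθ}` with `r θ > 0` on `[0,τ]`, then
its hyperbolic curvature is `im γ / r + cos θ`. -/
lemma kappaH_formula_aux (γ : ℝ → ℂ) (r : ℝ → ℝ) (τ : ℝ) (hτ : 0 < τ)
    (hγ : ContDiff ℝ 2 γ)
    (hr : ∀ θ ∈ Icc (0:ℝ) τ, 0 < r θ ∧ deriv γ θ = (r θ : ℂ) * Complex.exp (θ * Complex.I))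
    (θ : ℝ) (hθ : θ ∈ Icc (0:ℝ) τ) :
    ‖deriv γ θ‖ = r θ ∧
    ((starRingEnd ℂ) (deriv γ θ) * deriv (deriv γ) θ).im = r θ * r θ ∧
    (deriv γ θ).re = r θ * Real.cos θ := by
  obtain ⟨hrpos, hder⟩ := hr θ hθ
  have h2 : ContDiff ℝ (1+1 : ℕ) γ := by norm_num at hγ ⊢; exact hγ
  have hg1 : Differentiable ℝ (deriv γ) :=
    ((contDiff_succ_iff_deriv (n := 1)).mp (by exact_mod_cast h2)).2.2.differentiable (by norm_num)
  -- f x = deriv γ x * exp(-(x I))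
  set f : ℝ → ℂ := fun x => deriv γ x * Complex.exp (-(x * Complex.I)) with hf
  have hfval : ∀ x ∈ Icc (0:ℝ) τ, f x = (r x : ℂ) := by
    intro x hx
    simp only [hf, (hr x hx).2, mul_assoc, ← Complex.exp_add]
    simp
  have hexp : ∀ x : ℝ, HasDerivAt (fun x : ℝ => Complex.exp (-(x * Complex.I)))
      (-Complex.I * Complex.exp (-(x*Complex.I))) x := by
    intro x
    have h : HasDerivAt (fun x : ℝ => -((x:ℂ) * Complex.I)) (-Complex.I) x := by
      convert ((Complex.ofRealCLM.hasDerivAt (x := x)).mul_const Complex.I).neg using 1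
      · rfl
      · funext y; simp
      · simp
    simpa [mul_comm] using h.cexp
  set D := deriv (deriv γ) θ with hD
  have hfder : HasDerivAt f
      (D * Complex.exp (-(θ*Complex.I)) + deriv γ θ * (-Complex.I * Complex.exp (-(θ*Complex.I)))) θ :=
    ((hg1 θ).hasDerivAt.mul (hexp θ))
  -- imaginary part of derivative vanishes on the set
  have hFim : HasDerivWithinAt (fun x => (f x).im)
      (D * Complex.exp (-(θ*Complex.I)) + deriv γ θ * (-Complex.I * Complex.exp (-(θ*Complex.I)))).im
      (Icc 0 τ) θ :=
    (Complex.imCLM.hasFDerivAt.comp_hasDerivAt θ hfder).hasDerivWithinAt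
  have hF0 : HasDerivWithinAt (fun x => (f x).im) 0 (Icc 0 τ) θ := by
    have : HasDerivWithinAt (fun _ : ℝ => (0:ℝ)) 0 (Icc 0 τ) θ := (hasDerivWithinAt_const _ _ _)
    exact this.congr (fun x hx => by rw [hfval x hx]; simp) (by rw [hfval θ hθ]; simp)
  have hu : UniqueDiffWithinAt ℝ (Icc (0:ℝ) τ) θ := (uniqueDiffOn_Icc hτ) θ hθ
  have him0 : (D * Complex.exp (-(θ*Complex.I)) + deriv γ θ * (-Complex.I * Complex.exp (-(θ*Complex.I)))).im = 0 := by
    rw [← hFim.derivWithin hu, hF0.derivWithin hu]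
  -- second term: deriv γ θ * exp(-(θI)) = r θ, so term = r θ * (-I), im = -r θ
  have hsnd : deriv γ θ * (-Complex.I * Complex.exp (-(θ*Complex.I))) = (r θ : ℂ) * (-Complex.I) := by
    rw [hder]; rw [mul_comm (-Complex.I), ← mul_assoc, mul_assoc ((r θ : ℂ)), ← Complex.exp_add]
    simp [mul_comm]
  have hkey : (D * Complex.exp (-(θ*Complex.I))).im = r θ := by
    have := him0
    rw [hsnd, Complex.add_im] at this
    simp only [Complex.mul_im, Complex.ofReal_re, Complex.ofReal_im, Complex.neg_im,
      Complex.neg_re, Complex.I_re, Complex.I_im] at this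
    rw [Complex.mul_im]
    linarith
  refine ⟨?_, ?_, ?_⟩
  · rw [hder]
    simp [Complex.norm_exp, abs_of_pos hrpos]
  · have hconj : (starRingEnd ℂ) (deriv γ θ) = (r θ : ℂ) * Complex.exp (-(θ*Complex.I)) := by
      rw [hder, map_mul, Complex.conj_ofReal, ← Complex.exp_conj]
      congr 1
      simp [Complex.conj_I]
    rw [hconj, mul_assoc, mul_comm (Complex.exp _)]
    simp [Complex.mul_im, hkey]
  · rw [hder]
    simp [Complex.mul_re, Complex.exp_ofReal_mul_I_re]

lemma kappaH_formula (γ : ℝ → ℂ) (r : ℝ → ℝ) (τ : ℝ) (hτ : 0 < τ)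
    (hγ : ContDiff ℝ 2 γ)
    (hr : ∀ θ ∈ Icc (0:ℝ) τ, 0 < r θ ∧ deriv γ θ = (r θ : ℂ) * Complex.exp (θ * Complex.I))
    (θ : ℝ) (hθ : θ ∈ Icc (0:ℝ) τ) :
    kappaH γ θ = (γ θ).im / r θ + Real.cos θ := by
  obtain ⟨ha, hb, hc⟩ := kappaH_formula_aux γ r τ hτ hγ hr θ hθ
  have hrpos := (hr θ hθ).1
  unfold kappaH kappaE
  rw [ha, hb, hc]
  field_simp

lemma convex_pos {s a b : ℝ} (h0 : 0 ≤ s) (h1 : s ≤ 1) (ha : 0 < a) (hb : 0 < b) :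
    0 < (1-s)*a + s*b := by
  rcases lt_or_ge s 1 with h|h
  · nlinarith [mul_pos (by linarith : (0:ℝ) < 1-s) ha, mul_nonneg h0 hb.le]
  · have hs : s = 1 := le_antisymm h1 h
    subst hs; nlinarith

lemma mediant_bounds {s a₀ a₁ r₀ r₁ A B : ℝ} (h0 : 0 ≤ s) (h1 : s ≤ 1)
    (hr0 : 0 < r₀) (hr1 : 0 < r₁)
    (hA0 : A < a₀ / r₀) (hA1 : A < a₁ / r₁) (hB0 : a₀/r₀ < B) (hB1 : a₁/r₁ < B) :
    A < ((1-s)*a₀+s*a₁)/((1-s)*r₀+s*r₁) ∧ ((1-s)*a₀+s*a₁)/((1-s)*r₀+s*r₁) < B := by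
  have hrs := convex_pos h0 h1 hr0 hr1
  have hA0' : A * r₀ < a₀ := (lt_div_iff₀ hr0).mp hA0
  have hA1' : A * r₁ < a₁ := (lt_div_iff₀ hr1).mp hA1
  have hB0' : a₀ < B * r₀ := (div_lt_iff₀ hr0).mp hB0
  have hB1' : a₁ < B * r₁ := (div_lt_iff₀ hr1).mp hB1
  constructor
  · rw [lt_div_iff₀ hrs]
    rcases eq_or_lt_of_le h0 with h|h
    · rw [← h]; nlinarith
    · nlinarith [mul_lt_mul_of_pos_left hA1' h,
        mul_le_mul_of_nonneg_left hA0'.le (by linarith : (0:ℝ) ≤ 1-s)]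
  · rw [div_lt_iff₀ hrs]
    rcases eq_or_lt_of_le h0 with h|h
    · rw [← h]; nlinarith
    · nlinarith [mul_lt_mul_of_pos_left hB1' h,
        mul_le_mul_of_nonneg_left hB0'.le (by linarith : (0:ℝ) ≤ 1-s)]

theorem convex_combination_disjoint (κ₁ κ₂ : ℝ) (h1 : 1 ≤ κ₁) (h12 : κ₁ < κ₂)
    (τ : ℝ) (hτ : 0 < τ) (γ₀ γ₁ : ℝ → ℂ) (r₀ r₁ : ℝ → ℝ)
    (hγ₀ : ContDiff ℝ 2 γ₀) (hγ₁ : ContDiff ℝ 2 γ₁)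
    (him₀ : ∀ θ ∈ Icc (0:ℝ) τ, 0 < (γ₀ θ).im)
    (him₁ : ∀ θ ∈ Icc (0:ℝ) τ, 0 < (γ₁ θ).im)
    (hr₀ : ∀ θ ∈ Icc (0:ℝ) τ,
      0 < r₀ θ ∧ deriv γ₀ θ = (r₀ θ : ℂ) * Complex.exp (θ * Complex.I))
    (hr₁ : ∀ θ ∈ Icc (0:ℝ) τ,
      0 < r₁ θ ∧ deriv γ₁ θ = (r₁ θ : ℂ) * Complex.exp (θ * Complex.I))
    (hκ₀ : ∀ θ ∈ Icc (0:ℝ) τ, κ₁ < kappaH γ₀ θ ∧ kappaH γ₀ θ < κ₂)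
    (hκ₁ : ∀ θ ∈ Icc (0:ℝ) τ, κ₁ < kappaH γ₁ θ ∧ kappaH γ₁ θ < κ₂) :
    ∀ s ∈ Icc (0:ℝ) 1, ∀ θ ∈ Icc (0:ℝ) τ,
      0 < (((1 - (s:ℂ)) * γ₀ θ + (s:ℂ) * γ₁ θ)).im ∧
      (∃ r : ℝ, 0 < r ∧
        deriv (fun x => (1 - (s:ℂ)) * γ₀ x + (s:ℂ) * γ₁ x) θ
          = (r : ℂ) * Complex.exp (θ * Complex.I)) ∧
      κ₁ < kappaH (fun x => (1 - (s:ℂ)) * γ₀ x + (s:ℂ) * γ₁ x) θ ∧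
      kappaH (fun x => (1 - (s:ℂ)) * γ₀ x + (s:ℂ) * γ₁ x) θ < κ₂ := by
  intro s hs θ hθ
  obtain ⟨hs0, hs1⟩ := hs
  have hd0 : Differentiable ℝ γ₀ := hγ₀.differentiable (by norm_num)
  have hd1 : Differentiable ℝ γ₁ := hγ₁.differentiable (by norm_num)
  have hγs : ContDiff ℝ 2 (fun x => (1 - (s:ℂ)) * γ₀ x + (s:ℂ) * γ₁ x) :=
    (contDiff_const.mul hγ₀).add (contDiff_const.mul hγ₁)
  have hderS : ∀ x : ℝ, deriv (fun x => (1 - (s:ℂ)) * γ₀ x + (s:ℂ) * γ₁ x) x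
      = (1-(s:ℂ)) * deriv γ₀ x + (s:ℂ) * deriv γ₁ x := by
    intro x
    exact (((hd0 x).hasDerivAt.const_mul (1-(s:ℂ))).add
      ((hd1 x).hasDerivAt.const_mul ((s:ℂ)))).deriv
  have hrs : ∀ x ∈ Icc (0:ℝ) τ, 0 < (1-s)*r₀ x + s*r₁ x ∧
      deriv (fun x => (1 - (s:ℂ)) * γ₀ x + (s:ℂ) * γ₁ x) x
        = (((1-s)*r₀ x + s*r₁ x : ℝ) : ℂ) * Complex.exp (x * Complex.I) := by
    intro x hx
    refine ⟨convex_pos hs0 hs1 (hr₀ x hx).1 (hr₁ x hx).1, ?_⟩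
    rw [hderS, (hr₀ x hx).2, (hr₁ x hx).2]
    push_cast
    ring
  have himS : ∀ x : ℝ, ((1 - (s:ℂ)) * γ₀ x + (s:ℂ) * γ₁ x).im
      = (1-s)*(γ₀ x).im + s*(γ₁ x).im := by
    intro x
    simp [Complex.add_im, Complex.mul_im, Complex.sub_re, Complex.sub_im]
  have e0 := kappaH_formula γ₀ r₀ τ hτ hγ₀ hr₀ θ hθ
  have e1 := kappaH_formula γ₁ r₁ τ hτ hγ₁ hr₁ θ hθ
  have es := kappaH_formula _ (fun x => (1-s)*r₀ x + s*r₁ x) τ hτ hγs hrs θ hθ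
  have hm := mediant_bounds (A := κ₁ - Real.cos θ) (B := κ₂ - Real.cos θ)
    hs0 hs1 (hr₀ θ hθ).1 (hr₁ θ hθ).1
    (by have := (hκ₀ θ hθ).1; rw [e0] at this; linarith)
    (by have := (hκ₁ θ hθ).1; rw [e1] at this; linarith)
    (by have := (hκ₀ θ hθ).2; rw [e0] at this; linarith)
    (by have := (hκ₁ θ hθ).2; rw [e1] at this; linarith)
  refine ⟨?_, ⟨(1-s)*r₀ θ + s*r₁ θ, (hrs θ hθ).1, (hrs θ hθ).2⟩, ?_, ?_⟩
  · rw [himS]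
    exact convex_pos hs0 hs1 (him₀ θ hθ) (him₁ θ hθ)
  · rw [es, himS θ]
    linarith [hm.1]
  · rw [es, himS θ]
    linarith [hm.2]
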